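/- With P(s) = log Σ_i t_i(s) as above, the derivative P′ satisfies α_min ≤ P′(s) ≤ α_max for all s, where α_min = min_{i,j} φ(i,j) and α_max = max_{i,j} φ(i,j). Consequently the limits P′(−∞) and P′(+∞) lie in [α_min, α_max]. -/

import Mathlib

open Finset Filter

open Topology

/-- Comparison: a positive subsolution is dominated by a positive supersolution. -/
lemma aux_comp {m : ℕ} (hm : 0 < m) (φ : Fin m → Fin m → ℝ) (s : ℝ)
    (u v : Fin m → ℝ) (hu : ∀ i, 0 < u i) (hv : ∀ i, 0 < v i)
    (hsub : ∀ i, u i ^ 2 ≤ ∑ j, Real.exp (s * φ i j) * u j)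
    (hsup : ∀ i, (∑ j, Real.exp (s * φ i j) * v j) ≤ v i ^ 2) :
    ∀ i, u i ≤ v i := by
  have hne : Nonempty (Fin m) := ⟨⟨0, hm⟩⟩
  obtain ⟨i₀, -, hi₀⟩ := Finset.exists_max_image Finset.univ (fun i => u i / v i)
    Finset.univ_nonempty
  set l := u i₀ / v i₀ with hl
  have hlpos : 0 < l := div_pos (hu i₀) (hv i₀)
  have hle : ∀ j, u j ≤ l * v j := by
    intro j
    have h1 : u j / v j ≤ l := hi₀ j (Finset.mem_univ j)
    exact (div_le_iff₀ (hv j)).mp h1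
  have hui₀ : u i₀ = l * v i₀ := by
    rw [hl]; exact (div_mul_cancel₀ _ (hv i₀).ne').symm
  have key : u i₀ ^ 2 ≤ l * v i₀ ^ 2 := by
    calc u i₀ ^ 2 ≤ ∑ j, Real.exp (s * φ i₀ j) * u j := hsub i₀
    _ ≤ ∑ j, Real.exp (s * φ i₀ j) * (l * v j) :=
        Finset.sum_le_sum fun j _ => mul_le_mul_of_nonneg_left (hle j) (Real.exp_pos _).le
    _ = l * ∑ j, Real.exp (s * φ i₀ j) * v j := by
        rw [Finset.mul_sum]; exact Finset.sum_congr rfl fun j _ => by ring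
    _ ≤ l * v i₀ ^ 2 := mul_le_mul_of_nonneg_left (hsup i₀) hlpos.le
  have hl1 : l ≤ 1 := by
    rw [hui₀] at key
    have h2 : l * (l * v i₀ ^ 2) ≤ 1 * (l * v i₀ ^ 2) := by nlinarith [key]
    exact le_of_mul_le_mul_right h2 (mul_pos hlpos (pow_pos (hv i₀) 2))
  intro i
  calc u i ≤ l * v i := hle i
  _ ≤ 1 * v i := mul_le_mul_of_nonneg_right hl1 (hv i).le
  _ = v i := one_mul _

/-- Monotonicity bounds on the solution `t`. -/
lemma aux_mono {m : ℕ} (hm : 0 < m) (φ : Fin m → Fin m → ℝ)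
    (t : ℝ → Fin m → ℝ) (ht : ∀ s i, 0 < t s i)
    (heq : ∀ s i, (t s i) ^ 2 = ∑ j, Real.exp (s * φ i j) * t s j)
    (αmin αmax : ℝ)
    (hmin : ∀ i j, αmin ≤ φ i j) (hmax : ∀ i j, φ i j ≤ αmax)
    {s' s : ℝ} (hss : s' ≤ s) (i : Fin m) :
    Real.exp ((s - s') * αmin) * t s' i ≤ t s i ∧
      t s i ≤ Real.exp ((s - s') * αmax) * t s' i := by
  have hs0 : 0 ≤ s - s' := sub_nonneg.mpr hss
  constructor
  · -- lower bound: u = c' • t s' is a subsolution for parameter s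
    set c := Real.exp ((s - s') * αmin) with hc
    refine aux_comp hm φ s (fun i => c * t s' i) (t s) (fun i => mul_pos (Real.exp_pos _) (ht s' i))
      (ht s) ?_ (fun i => (heq s i).ge) i
    intro i
    have hkey : ∀ j, c * (c * (Real.exp (s' * φ i j) * t s' j)) ≤ Real.exp (s * φ i j) * (c * t s' j) := by
      intro j
      have h1 : c * Real.exp (s' * φ i j) ≤ Real.exp (s * φ i j) := by
        rw [hc, ← Real.exp_add]
        refine Real.exp_le_exp.mpr ?_
        have := mul_le_mul_of_nonneg_left (hmin i j) hs0
        nlinarith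
      nlinarith [(ht s' j).le, (Real.exp_pos ((s - s') * αmin)).le, mul_le_mul_of_nonneg_right h1 (ht s' j).le, (Real.exp_pos ((s - s') * αmin))]
    calc (c * t s' i) ^ 2 = c * (c * (t s' i ^ 2)) := by ring
    _ = c * (c * ∑ j, Real.exp (s' * φ i j) * t s' j) := by rw [heq]
    _ = ∑ j, c * (c * (Real.exp (s' * φ i j) * t s' j)) := by
        rw [Finset.mul_sum, Finset.mul_sum]
    _ ≤ ∑ j, Real.exp (s * φ i j) * (c * t s' j) := Finset.sum_le_sum fun j _ => hkey j
  · -- upper bound: v = c • t s' is a supersolution for parameter s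
    set c := Real.exp ((s - s') * αmax) with hc
    refine aux_comp hm φ s (t s) (fun i => c * t s' i) (ht s)
      (fun i => mul_pos (Real.exp_pos _) (ht s' i)) (fun i => (heq s i).le) ?_ i
    intro i
    have hkey : ∀ j, Real.exp (s * φ i j) * (c * t s' j) ≤ c * (c * (Real.exp (s' * φ i j) * t s' j)) := by
      intro j
      have h1 : Real.exp (s * φ i j) ≤ c * Real.exp (s' * φ i j) := by
        rw [hc, ← Real.exp_add]
        refine Real.exp_le_exp.mpr ?_
        have := mul_le_mul_of_nonneg_left (hmax i j) hs0
        nlinarith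
      nlinarith [(ht s' j).le, (Real.exp_pos ((s - s') * αmax)).le, mul_le_mul_of_nonneg_right h1 (ht s' j).le]
    calc (∑ j, Real.exp (s * φ i j) * (c * t s' j))
        ≤ ∑ j, c * (c * (Real.exp (s' * φ i j) * t s' j)) := Finset.sum_le_sum fun j _ => hkey j
    _ = c * (c * ∑ j, Real.exp (s' * φ i j) * t s' j) := by
        rw [Finset.mul_sum, Finset.mul_sum]
    _ = c * (c * (t s' i ^ 2)) := by rw [heq]
    _ = (c * t s' i) ^ 2 := by ring

open Finset Filter ContinuousLinearMap

lemma phi_deriv {m : ℕ} (φ : Fin m → Fin m → ℝ) (p : ℝ × (Fin m → ℝ)) :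
    ∃ L : (ℝ × (Fin m → ℝ)) →L[ℝ] (ℝ × (Fin m → ℝ)),
      (∀ v : ℝ × (Fin m → ℝ), L v = (v.1, fun i => 2 * p.2 i * v.2 i
          - ∑ j, Real.exp (p.1 * φ i j) * (φ i j * p.2 j * v.1 + v.2 j))) ∧
      HasStrictFDerivAt (fun q : ℝ × (Fin m → ℝ) =>
        (q.1, fun i => (q.2 i) ^ 2 - ∑ j, Real.exp (q.1 * φ i j) * q.2 j) : _ → ℝ × (Fin m → ℝ)) L p := by
  classical
  have hE : True := trivial
  set c : Fin m → ((ℝ × (Fin m → ℝ)) →L[ℝ] ℝ) :=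
    fun j => (ContinuousLinearMap.proj j).comp (ContinuousLinearMap.snd ℝ ℝ (Fin m → ℝ)) with hcdef
  have hc : ∀ j, HasStrictFDerivAt (fun q : ℝ × (Fin m → ℝ) => q.2 j) (c j) p := fun j =>
    (c j).hasStrictFDerivAt
  have hfst : HasStrictFDerivAt (fun q : ℝ × (Fin m → ℝ) => q.1) (ContinuousLinearMap.fst ℝ ℝ (Fin m → ℝ)) p :=
    hasStrictFDerivAt_fst
  -- per-coordinate derivative
  set D : Fin m → ((ℝ × (Fin m → ℝ)) →L[ℝ] ℝ) := fun i =>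
    (p.2 i • c i + p.2 i • c i) -
      ∑ j, (Real.exp (p.1 * φ i j) • c j +
        p.2 j • (Real.exp (p.1 * φ i j) • ((φ i j) • (ContinuousLinearMap.fst ℝ ℝ (Fin m → ℝ))))) with hDdef
  have hcomp : ∀ i, HasStrictFDerivAt
      (fun q : ℝ × (Fin m → ℝ) => (q.2 i) ^ 2 - ∑ j, Real.exp (q.1 * φ i j) * q.2 j) (D i) p := by
    intro i
    have hsq : HasStrictFDerivAt (fun q : ℝ × (Fin m → ℝ) => q.2 i * q.2 i) (p.2 i • c i + p.2 i • c i) p :=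
      (hc i).mul (hc i)
    have hterm : ∀ j, HasStrictFDerivAt (fun q : ℝ × (Fin m → ℝ) => Real.exp (q.1 * φ i j) * q.2 j)
        (Real.exp (p.1 * φ i j) • c j +
          p.2 j • (Real.exp (p.1 * φ i j) • ((φ i j) • (ContinuousLinearMap.fst ℝ ℝ (Fin m → ℝ))))) p := by
      intro j
      have h1 : HasStrictFDerivAt (fun q : ℝ × (Fin m → ℝ) => q.1 * φ i j)
          ((φ i j) • (ContinuousLinearMap.fst ℝ ℝ (Fin m → ℝ))) p := hfst.mul_const (φ i j)
      have h2 := h1.exp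
      exact h2.mul (hc j)
    have hsum := HasStrictFDerivAt.fun_sum (u := Finset.univ)
      (A := fun j (q : ℝ × (Fin m → ℝ)) => Real.exp (q.1 * φ i j) * q.2 j) (fun j _ => hterm j)
    have := hsq.sub hsum
    have heqfun : (fun q : ℝ × (Fin m → ℝ) => (q.2 i) ^ 2 - ∑ j, Real.exp (q.1 * φ i j) * q.2 j)
        = (fun q : ℝ × (Fin m → ℝ) => q.2 i * q.2 i - ∑ j ∈ Finset.univ, Real.exp (q.1 * φ i j) * q.2 j) := by
      funext q; rw [pow_two]
    rw [hDdef, heqfun]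
    exact this
  refine ⟨(ContinuousLinearMap.fst ℝ ℝ (Fin m → ℝ)).prod (ContinuousLinearMap.pi D), ?_, ?_⟩
  · intro v
    refine Prod.ext rfl ?_
    funext i
    simp only [ContinuousLinearMap.prod_apply, ContinuousLinearMap.pi_apply, hDdef,
      ContinuousLinearMap.sub_apply, ContinuousLinearMap.add_apply, ContinuousLinearMap.smul_apply,
      ContinuousLinearMap.coe_sum', Finset.sum_apply, ContinuousLinearMap.comp_apply,
      ContinuousLinearMap.proj_apply, ContinuousLinearMap.coe_snd', ContinuousLinearMap.coe_fst',
      hcdef, smul_eq_mul]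
    have hs : ∑ x, (φ i x * Real.exp (p.1 * φ i x) * p.2 x * v.1 + Real.exp (p.1 * φ i x) * v.2 x)
        = ∑ j, Real.exp (p.1 * φ i j) * (φ i j * p.2 j * v.1 + v.2 j) :=
      Finset.sum_congr rfl fun j _ => by ring
    ring_nf
    rw [hs]; congr 1; exact Finset.sum_congr rfl fun j _ => by ring
  · exact hfst.prodMk (hasStrictFDerivAt_pi.mpr hcomp)

/-- The derivative of the pressure `P(s) = log ∑_i t_i(s)` always lies between
`α_min = min φ` and `α_max = max φ`; consequently the limits `P′(∓∞)` lie in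
`[α_min, α_max]`. -/
theorem pressure_deriv_between_min_max
    (m : ℕ) (hm : 2 ≤ m) (φ : Fin m → Fin m → ℝ)
    (t : ℝ → Fin m → ℝ)
    (ht : ∀ s i, 0 < t s i)
    (heq : ∀ s i, (t s i) ^ 2 = ∑ j, Real.exp (s * φ i j) * t s j)
    (P : ℝ → ℝ) (hP : ∀ s, P s = Real.log (∑ i, t s i))
    (αmin αmax : ℝ)
    (hαmin : IsLeast (Set.range fun p : Fin m × Fin m => φ p.1 p.2) αmin)
    (hαmax : IsGreatest (Set.range fun p : Fin m × Fin m => φ p.1 p.2) αmax)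
    (Pm Pp : ℝ)
    (hPm : Tendsto (deriv P) atBot (nhds Pm))
    (hPp : Tendsto (deriv P) atTop (nhds Pp)) :
    (∀ s, αmin ≤ deriv P s ∧ deriv P s ≤ αmax) ∧
      Pm ∈ Set.Icc αmin αmax ∧ Pp ∈ Set.Icc αmin αmax := by
  have hm0 : 0 < m := by omega
  have hne : Nonempty (Fin m) := ⟨⟨0, hm0⟩⟩
  have hmin : ∀ i j, αmin ≤ φ i j := fun i j => hαmin.2 ⟨(i, j), rfl⟩
  have hmax : ∀ i j, φ i j ≤ αmax := fun i j => hαmax.2 ⟨(i, j), rfl⟩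
  -- continuity of t
  have hcont : ∀ s₀ : ℝ, ContinuousAt t s₀ := by
    intro s₀
    rw [continuousAt_pi]
    intro i
    have hlo : ∀ s, min (Real.exp ((s - s₀) * αmin)) (Real.exp ((s - s₀) * αmax)) * t s₀ i
        ≤ t s i := by
      intro s
      rcases le_total s₀ s with h | h
      · have h1 := (aux_mono hm0 φ t ht heq αmin αmax hmin hmax h i).1
        exact le_trans (mul_le_mul_of_nonneg_right (min_le_left _ _) (ht s₀ i).le) h1
      · have h2 := (aux_mono hm0 φ t ht heq αmin αmax hmin hmax h i).2
        have hexp : Real.exp ((s - s₀) * αmax) * Real.exp ((s₀ - s) * αmax) = 1 := by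
          rw [← Real.exp_add]
          rw [show (s - s₀) * αmax + (s₀ - s) * αmax = 0 by ring, Real.exp_zero]
        have h3 := mul_le_mul_of_nonneg_left h2 (Real.exp_pos ((s - s₀) * αmax)).le
        have h4 : Real.exp ((s - s₀) * αmax) * (Real.exp ((s₀ - s) * αmax) * t s i) = t s i := by
          rw [← mul_assoc, hexp, one_mul]
        calc min (Real.exp ((s - s₀) * αmin)) (Real.exp ((s - s₀) * αmax)) * t s₀ i
            ≤ Real.exp ((s - s₀) * αmax) * t s₀ i :=
              mul_le_mul_of_nonneg_right (min_le_right _ _) (ht s₀ i).le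
        _ ≤ t s i := by rw [h4] at h3; exact h3
    have hhi : ∀ s, t s i ≤ max (Real.exp ((s - s₀) * αmin)) (Real.exp ((s - s₀) * αmax)) * t s₀ i := by
      intro s
      rcases le_total s₀ s with h | h
      · have h1 := (aux_mono hm0 φ t ht heq αmin αmax hmin hmax h i).2
        exact le_trans h1 (mul_le_mul_of_nonneg_right (le_max_right _ _) (ht s₀ i).le)
      · have h2 := (aux_mono hm0 φ t ht heq αmin αmax hmin hmax h i).1
        have hexp : Real.exp ((s - s₀) * αmin) * Real.exp ((s₀ - s) * αmin) = 1 := by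
          rw [← Real.exp_add]
          rw [show (s - s₀) * αmin + (s₀ - s) * αmin = 0 by ring, Real.exp_zero]
        have h3 := mul_le_mul_of_nonneg_left h2 (Real.exp_pos ((s - s₀) * αmin)).le
        have h4 : Real.exp ((s - s₀) * αmin) * (Real.exp ((s₀ - s) * αmin) * t s i) = t s i := by
          rw [← mul_assoc, hexp, one_mul]
        have h5 : t s i ≤ Real.exp ((s - s₀) * αmin) * t s₀ i := by rw [h4] at h3; exact h3
        exact le_trans h5 (mul_le_mul_of_nonneg_right (le_max_left _ _) (ht s₀ i).le)
    have hltend : Tendsto (fun s => min (Real.exp ((s - s₀) * αmin))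
        (Real.exp ((s - s₀) * αmax)) * t s₀ i) (𝓝 s₀) (𝓝 (t s₀ i)) := by
      have hcts : Continuous fun s : ℝ => min (Real.exp ((s - s₀) * αmin))
          (Real.exp ((s - s₀) * αmax)) * t s₀ i := by fun_prop
      have h0 := hcts.tendsto s₀
      simpa using h0
    have hhtend : Tendsto (fun s => max (Real.exp ((s - s₀) * αmin))
        (Real.exp ((s - s₀) * αmax)) * t s₀ i) (𝓝 s₀) (𝓝 (t s₀ i)) := by
      have hcts : Continuous fun s : ℝ => max (Real.exp ((s - s₀) * αmin))
          (Real.exp ((s - s₀) * αmax)) * t s₀ i := by fun_prop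
      have h0 := hcts.tendsto s₀
      simpa using h0
    exact tendsto_of_tendsto_of_tendsto_of_le_of_le hltend hhtend hlo hhi
  -- differentiability of t
  have hdiff : ∀ s₀ : ℝ, DifferentiableAt ℝ t s₀ := by
    intro s₀
    obtain ⟨L, hLapp, hL⟩ := phi_deriv φ (s₀, t s₀)
    have hinj : Function.Injective L := by
      refine (injective_iff_map_eq_zero L).mpr ?_
      intro v hv
      have h0 : (v.1, fun i => 2 * t s₀ i * v.2 i
          - ∑ j, Real.exp (s₀ * φ i j) * (φ i j * t s₀ j * v.1 + v.2 j)) = (0 : ℝ × (Fin m → ℝ)) :=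
        (hLapp v).symm.trans hv
      rw [Prod.ext_iff] at h0
      have h1 : v.1 = 0 := h0.1
      have h2 : ∀ i, 2 * t s₀ i * v.2 i = ∑ j, Real.exp (s₀ * φ i j) * v.2 j := by
        intro i
        have h2i : 2 * t s₀ i * v.2 i
            - ∑ j, Real.exp (s₀ * φ i j) * (φ i j * t s₀ j * v.1 + v.2 j) = 0 :=
          congrFun h0.2 i
        rw [h1] at h2i
        have h3 : ∑ j, Real.exp (s₀ * φ i j) * (φ i j * t s₀ j * 0 + v.2 j)
            = ∑ j, Real.exp (s₀ * φ i j) * v.2 j :=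
          Finset.sum_congr rfl fun j _ => by ring
        rw [h3] at h2i
        linarith [h2i]
      obtain ⟨i₀, -, hi₀⟩ := Finset.exists_max_image Finset.univ
        (fun i => |v.2 i| / t s₀ i) Finset.univ_nonempty
      set r := |v.2 i₀| / t s₀ i₀ with hrdef
      have hr0 : 0 ≤ r := div_nonneg (abs_nonneg _) (ht s₀ i₀).le
      have hler : ∀ j, |v.2 j| ≤ r * t s₀ j := fun j =>
        (div_le_iff₀ (ht s₀ j)).mp (hi₀ j (Finset.mem_univ j))
      have habs : 2 * t s₀ i₀ * |v.2 i₀| ≤ r * t s₀ i₀ ^ 2 := by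
        calc 2 * t s₀ i₀ * |v.2 i₀| = |2 * t s₀ i₀ * v.2 i₀| := by
              rw [abs_mul, abs_of_nonneg (by linarith [ht s₀ i₀] : (0:ℝ) ≤ 2 * t s₀ i₀)]
        _ = |∑ j, Real.exp (s₀ * φ i₀ j) * v.2 j| := by rw [h2 i₀]
        _ ≤ ∑ j, |Real.exp (s₀ * φ i₀ j) * v.2 j| := Finset.abs_sum_le_sum_abs _ _
        _ ≤ ∑ j, Real.exp (s₀ * φ i₀ j) * (r * t s₀ j) := by
              refine Finset.sum_le_sum fun j _ => ?_
              rw [abs_mul, abs_of_pos (Real.exp_pos _)]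
              exact mul_le_mul_of_nonneg_left (hler j) (Real.exp_pos _).le
        _ = r * ∑ j, Real.exp (s₀ * φ i₀ j) * t s₀ j := by
              rw [Finset.mul_sum]; exact Finset.sum_congr rfl fun j _ => by ring
        _ = r * t s₀ i₀ ^ 2 := by rw [← heq]
      have hvi₀ : |v.2 i₀| = r * t s₀ i₀ := (div_mul_cancel₀ _ (ht s₀ i₀).ne').symm
      rw [hvi₀] at habs
      have hr : r ≤ 0 := by nlinarith [pow_pos (ht s₀ i₀) 2, ht s₀ i₀]
      have hv2 : v.2 = 0 := by
        funext j
        have := hler j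
        have h5 : r * t s₀ j ≤ 0 := mul_nonpos_of_nonpos_of_nonneg hr (ht s₀ j).le
        exact abs_nonpos_iff.mp (le_trans this h5)
      exact Prod.ext h1 (by rw [hv2]; rfl)
    have hbij : Function.Bijective L.toLinearMap :=
      ⟨hinj, LinearMap.injective_iff_surjective.mp hinj⟩
    let eL := LinearEquiv.ofBijective L.toLinearMap hbij
    let eC := eL.toContinuousLinearEquiv
    have heC : (eC : (ℝ × (Fin m → ℝ)) →L[ℝ] (ℝ × (Fin m → ℝ))) = L :=
      ContinuousLinearMap.ext fun v => rfl
    have hL'' : HasStrictFDerivAt (fun q : ℝ × (Fin m → ℝ) =>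
        (q.1, fun i => (q.2 i) ^ 2 - ∑ j, Real.exp (q.1 * φ i j) * q.2 j) : _ → ℝ × (Fin m → ℝ))
        (eC : (ℝ × (Fin m → ℝ)) →L[ℝ] (ℝ × (Fin m → ℝ))) (s₀, t s₀) := by
      rw [heC]; exact hL
    have hΦt : ∀ s, (fun q : ℝ × (Fin m → ℝ) =>
        (q.1, fun i => (q.2 i) ^ 2 - ∑ j, Real.exp (q.1 * φ i j) * q.2 j)) (s, t s)
        = ((s, fun _ => 0) : ℝ × (Fin m → ℝ)) := by
      intro s
      refine Prod.ext rfl ?_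
      funext i
      exact sub_eq_zero.mpr (heq s i)
    set Ψ := hL''.localInverse _ eC (s₀, t s₀) with hΨdef
    have hΨ := hL''.to_localInverse
    have hgd : DifferentiableAt ℝ (fun s : ℝ => (Ψ (s, fun _ => 0)).2) s₀ := by
      have h1 : DifferentiableAt ℝ (fun s : ℝ => ((s, fun _ => 0) : ℝ × (Fin m → ℝ))) s₀ :=
        differentiableAt_id.prodMk (differentiableAt_const _)
      have h2 : DifferentiableAt ℝ Ψ ((s₀, fun _ => 0) : ℝ × (Fin m → ℝ)) := by
        have h3 := hΨ.differentiableAt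
        have h4 : ((s₀, t s₀).1, fun i => (s₀, t s₀).2 i ^ 2
            - ∑ j, Real.exp ((s₀, t s₀).1 * φ i j) * (s₀, t s₀).2 j)
            = ((s₀, fun _ => 0) : ℝ × (Fin m → ℝ)) := hΦt s₀
        rwa [h4] at h3
      exact (h2.comp s₀ h1).snd
    have hev : (fun s : ℝ => (Ψ (s, fun _ => 0)).2) =ᶠ[𝓝 s₀] t := by
      have h1 := hL''.eventually_left_inverse
      have h2 : ContinuousAt (fun s : ℝ => ((s, t s) : ℝ × (Fin m → ℝ))) s₀ :=
        continuousAt_id.prodMk (hcont s₀)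
      filter_upwards [h2.eventually h1] with s hs
      have h5 : Ψ ((s, fun _ => 0) : ℝ × (Fin m → ℝ)) = (s, t s) := by
        rw [← hΦt s]; exact hs
      exact congrArg Prod.snd h5
    exact hgd.congr_of_eventuallyEq hev.symm
  -- differentiability of P
  have hPfun : P = fun s => Real.log (∑ i, t s i) := funext hP
  have hpos : ∀ s, 0 < ∑ i, t s i := fun s =>
    Finset.sum_pos (fun i _ => ht s i) Finset.univ_nonempty
  have hPdiff : ∀ s₀ : ℝ, DifferentiableAt ℝ P s₀ := by
    intro s₀
    have hsum : DifferentiableAt ℝ (fun s => ∑ i, t s i) s₀ :=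
      DifferentiableAt.fun_sum fun i _ => differentiableAt_pi.mp (hdiff s₀) i
    rw [hPfun]
    exact (Real.differentiableAt_log (hpos s₀).ne').comp s₀ hsum
  -- P increments
  have hPinc : ∀ s' s : ℝ, s' ≤ s →
      αmin * (s - s') ≤ P s - P s' ∧ P s - P s' ≤ αmax * (s - s') := by
    intro s' s hss
    have hub : ∑ i, t s i ≤ Real.exp ((s - s') * αmax) * ∑ i, t s' i := by
      rw [Finset.mul_sum]
      exact Finset.sum_le_sum fun i _ => (aux_mono hm0 φ t ht heq αmin αmax hmin hmax hss i).2
    have hlb : Real.exp ((s - s') * αmin) * ∑ i, t s' i ≤ ∑ i, t s i := by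
      rw [Finset.mul_sum]
      exact Finset.sum_le_sum fun i _ => (aux_mono hm0 φ t ht heq αmin αmax hmin hmax hss i).1
    constructor
    · have h1 := Real.log_le_log (mul_pos (Real.exp_pos _) (hpos s')) hlb
      rw [Real.log_mul (Real.exp_ne_zero _) (hpos s').ne', Real.log_exp] at h1
      rw [hP s, hP s']
      nlinarith [h1]
    · have h1 := Real.log_le_log (hpos s) hub
      rw [Real.log_mul (Real.exp_ne_zero _) (hpos s').ne', Real.log_exp] at h1
      rw [hP s, hP s']
      nlinarith [h1]
  -- main bound
  have key : ∀ s₀ : ℝ, αmin ≤ deriv P s₀ ∧ deriv P s₀ ≤ αmax := by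
    intro s₀
    have hd : HasDerivAt P (deriv P s₀) s₀ := (hPdiff s₀).hasDerivAt
    have hslope := hasDerivAt_iff_tendsto_slope.mp hd
    have hslope' : Tendsto (slope P s₀) (𝓝[>] s₀) (𝓝 (deriv P s₀)) :=
      hslope.mono_left (nhdsWithin_mono _ fun x hx => ne_of_gt hx)
    have hevs : ∀ᶠ s in 𝓝[>] s₀, αmin ≤ slope P s₀ s ∧ slope P s₀ s ≤ αmax := by
      filter_upwards [self_mem_nhdsWithin] with s hs
      have hlt : (0:ℝ) < s - s₀ := sub_pos.mpr hs
      have h := hPinc s₀ s (le_of_lt hs)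
      rw [slope_def_field]
      constructor
      · rw [le_div_iff₀ hlt]; linarith [h.1]
      · rw [div_le_iff₀ hlt]; linarith [h.2]
    exact ⟨ge_of_tendsto hslope' (hevs.mono fun s h => h.1),
      le_of_tendsto hslope' (hevs.mono fun s h => h.2)⟩
  exact ⟨key,
    Set.mem_Icc.mpr ⟨ge_of_tendsto' hPm fun s => (key s).1, le_of_tendsto' hPm fun s => (key s).2⟩,
    Set.mem_Icc.mpr ⟨ge_of_tendsto' hPp fun s => (key s).1, le_of_tendsto' hPp fun s => (key s).2⟩⟩
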